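/- If d = ⟨d₁,…,dₙ⟩ and d - k = ⟨d₁-k,…,dₙ-k⟩ are both graphic sequences, then the sequences ⟨d₁-k,…,dₙ-k⟩ and the constant sequence ⟨k,k,…,k⟩ pack, i.e., there exist edge-disjoint realizations of the two sequences on the same n vertices whose union realizes d with the constant part forming a k-factor. -/

import Mathlib

set_option linter.unusedSectionVars false

open Finset

namespace KunduProof

open scoped Classical

variable {V : Type*} [Fintype V] [DecidableEq V]

/-- unordered pair equality predicate -/
def pr (x y a b : V) : Prop := (x = a ∧ y = b) ∨ (x = b ∧ y = a)

lemma pr_symm {x y a b : V} (h : pr x y a b) : pr y x a b := by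
  unfold pr at *; tauto

/-- the 2-switch: remove edges {p,q}, {r,s}; add edges {p,r}, {q,s}. -/
def sw (G : SimpleGraph V) (p q r s : V) (hpr : p ≠ r) (hqs : q ≠ s) : SimpleGraph V where
  Adj x y := (G.Adj x y ∨ pr x y p r ∨ pr x y q s) ∧ ¬(pr x y p q ∨ pr x y r s)
  symm := by
    constructor
    intro x y h
    refine ⟨?_, ?_⟩
    · rcases h.1 with h1 | h1 | h1
      · exact Or.inl h1.symm
      · exact Or.inr (Or.inl (pr_symm h1))
      · exact Or.inr (Or.inr (pr_symm h1))
    · intro hc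
      exact h.2 (by rcases hc with hc | hc; exact Or.inl (pr_symm hc); exact Or.inr (pr_symm hc))
  loopless := by
    constructor
    intro x h
    rcases h.1 with h1 | h1 | h1
    · exact G.loopless.irrefl x h1
    · unfold pr at h1
      rcases h1 with ⟨h2, h3⟩ | ⟨h2, h3⟩
      · exact hpr (h2.symm.trans h3)
      · exact hpr (h3.symm.trans h2)
    · unfold pr at h1
      rcases h1 with ⟨h2, h3⟩ | ⟨h2, h3⟩
      · exact hqs (h2.symm.trans h3)
      · exact hqs (h3.symm.trans h2)

lemma sw_adj (G : SimpleGraph V) (p q r s : V) (hpr : p ≠ r) (hqs : q ≠ s) (x y : V) :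
    (sw G p q r s hpr hqs).Adj x y ↔
      (G.Adj x y ∨ pr x y p r ∨ pr x y q s) ∧ ¬(pr x y p q ∨ pr x y r s) := Iff.rfl

/-- classical neighborhood finset -/
noncomputable def nbr (G : SimpleGraph V) (v : V) : Finset V :=
  univ.filter (fun w => G.Adj v w)

noncomputable def deg' (G : SimpleGraph V) (v : V) : ℕ := (nbr G v).card

lemma mem_nbr {G : SimpleGraph V} {v w : V} : w ∈ nbr G v ↔ G.Adj v w := by
  simp [nbr]

end KunduProof

namespace KunduProof
open scoped Classical

variable {V : Type*} [Fintype V] [DecidableEq V]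

lemma card_insert_erase {s : Finset V} {a b : V} (ha : a ∉ s) (hb : b ∈ s) :
    (insert a (s.erase b)).card = s.card := by
  have h1 := Finset.card_erase_add_one hb
  rw [card_insert_of_notMem (fun h => ha (mem_of_mem_erase h))]
  omega

lemma pr_swap (x y a b : V) : pr x y a b ↔ pr x y b a := or_comm

lemma sw_eq_perm1 (G : SimpleGraph V) (p q r s : V) (hpr : p ≠ r) (hqs : q ≠ s) :
    sw G p q r s hpr hqs = sw G q p s r hqs hpr := by
  ext x y
  rw [sw_adj, sw_adj]
  exact and_congr (or_congr Iff.rfl or_comm)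
    (not_congr (or_congr (pr_swap x y p q) (pr_swap x y r s)))

lemma sw_eq_perm2 (G : SimpleGraph V) (p q r s : V) (hpr : p ≠ r) (hqs : q ≠ s) :
    sw G p q r s hpr hqs = sw G r s p q hpr.symm hqs.symm := by
  ext x y
  rw [sw_adj, sw_adj]
  exact and_congr (or_congr Iff.rfl
    (or_congr (pr_swap x y p r) (pr_swap x y q s))) (not_congr or_comm)

lemma nbr_sw_p (G : SimpleGraph V) (p q r s : V)
    (hpq : p ≠ q) (hpr : p ≠ r) (hps : p ≠ s) (hqr : q ≠ r) (hqs : q ≠ s) (hrs : r ≠ s) :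
    nbr (sw G p q r s hpr hqs) p = insert r ((nbr G p).erase q) := by
  ext w
  rw [mem_nbr, sw_adj]
  simp only [mem_insert, mem_erase, mem_nbr]
  constructor
  · rintro ⟨h1, h2⟩
    have hwq : w ≠ q := fun e => h2 (Or.inl (Or.inl ⟨rfl, e⟩))
    rcases h1 with h1 | (⟨_, e⟩ | ⟨e, _⟩) | (⟨e, _⟩ | ⟨e, _⟩)
    · exact Or.inr ⟨hwq, h1⟩
    · exact Or.inl e
    · exact absurd e hpr
    · exact absurd e hpq
    · exact absurd e hps
  · rintro (rfl | ⟨hwq, hadj⟩)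
    · refine ⟨Or.inr (Or.inl (Or.inl ⟨rfl, rfl⟩)), ?_⟩
      rintro ((⟨_, e⟩ | ⟨e, _⟩) | (⟨e, _⟩ | ⟨e, _⟩))
      · exact hqr e.symm
      · exact hpq e
      · exact hpr e
      · exact hps e
    · refine ⟨Or.inl hadj, ?_⟩
      rintro ((⟨_, e⟩ | ⟨e, _⟩) | (⟨e, _⟩ | ⟨e, _⟩))
      · exact hwq e
      · exact hpq e
      · exact hpr e
      · exact hps e

lemma nbr_sw_other (G : SimpleGraph V) (p q r s : V) (hpr : p ≠ r) (hqs : q ≠ s) (v : V)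
    (hvp : v ≠ p) (hvq : v ≠ q) (hvr : v ≠ r) (hvs : v ≠ s) :
    nbr (sw G p q r s hpr hqs) v = nbr G v := by
  ext w
  rw [mem_nbr, sw_adj, mem_nbr]
  unfold pr
  constructor
  · rintro ⟨h1, _⟩
    rcases h1 with h1 | (⟨e, _⟩ | ⟨e, _⟩) | (⟨e, _⟩ | ⟨e, _⟩)
    · exact h1
    · exact absurd e hvp
    · exact absurd e hvr
    · exact absurd e hvq
    · exact absurd e hvs
  · intro h
    refine ⟨Or.inl h, ?_⟩
    rintro ((⟨e, _⟩ | ⟨e, _⟩) | (⟨e, _⟩ | ⟨e, _⟩))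
    · exact hvp e
    · exact hvq e
    · exact hvr e
    · exact hvs e

lemma sw_deg (G : SimpleGraph V) (p q r s : V)
    (hpq : p ≠ q) (hpr : p ≠ r) (hps : p ≠ s) (hqr : q ≠ r) (hqs : q ≠ s) (hrs : r ≠ s)
    (hApq : G.Adj p q) (hArs : G.Adj r s) (hNpr : ¬G.Adj p r) (hNqs : ¬G.Adj q s) (v : V) :
    deg' (sw G p q r s hpr hqs) v = deg' G v := by
  unfold deg'
  by_cases hvp : v = p
  · subst hvp
    rw [nbr_sw_p G v q r s hpq hpr hps hqr hqs hrs]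
    exact card_insert_erase (fun h => hNpr (mem_nbr.mp h)) (mem_nbr.mpr hApq)
  by_cases hvq : v = q
  · subst hvq
    rw [sw_eq_perm1, nbr_sw_p G v p s r hpq.symm hqs hqr hps hpr hrs.symm]
    exact card_insert_erase (fun h => hNqs (mem_nbr.mp h)) (mem_nbr.mpr hApq.symm)
  by_cases hvr : v = r
  · subst hvr
    rw [sw_eq_perm2, nbr_sw_p G v s p q hrs hpr.symm hqr.symm hps.symm hqs.symm hpq]
    exact card_insert_erase (fun h => hNpr ((mem_nbr.mp h).symm)) (mem_nbr.mpr hArs)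
  by_cases hvs : v = s
  · subst hvs
    rw [sw_eq_perm2, sw_eq_perm1, nbr_sw_p G v r q p hrs.symm hqs.symm hps.symm hqr.symm hpr.symm hpq.symm]
    exact card_insert_erase (fun h => hNqs ((mem_nbr.mp h).symm)) (mem_nbr.mpr hArs.symm)
  · rw [nbr_sw_other G p q r s hpr hqs v hvp hvq hvr hvs]

end KunduProof

namespace KunduProof
open scoped Classical

variable {V : Type*} [Fintype V] [DecidableEq V]

noncomputable def red (G H : SimpleGraph V) (v : V) : Finset V :=
  univ.filter (fun w => H.Adj v w ∧ ¬G.Adj v w)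

noncomputable def blu (G H : SimpleGraph V) (v : V) : Finset V :=
  univ.filter (fun w => G.Adj v w ∧ ¬H.Adj v w)

noncomputable def meas (G H : SimpleGraph V) : ℕ := ∑ v, (red G H v).card

lemma mem_red {G H : SimpleGraph V} {v w : V} :
    w ∈ red G H v ↔ H.Adj v w ∧ ¬G.Adj v w := by simp [red]

lemma mem_blu {G H : SimpleGraph V} {v w : V} :
    w ∈ blu G H v ↔ G.Adj v w ∧ ¬H.Adj v w := by simp [blu]

lemma split_deg (G H : SimpleGraph V) (v : V) :
    (univ.filter (fun w => H.Adj v w ∧ G.Adj v w)).card + (red G H v).card = deg' H v := by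
  unfold red deg' nbr
  rw [← Finset.filter_filter, ← Finset.filter_filter]
  exact Finset.card_filter_add_card_filter_not (fun w => G.Adj v w)

lemma blu_red (G H : SimpleGraph V) (v : V) :
    (blu G H v).card + deg' H v = (red G H v).card + deg' G v := by
  have h1 := split_deg G H v
  have h2 := split_deg H G v
  have h3 : (univ.filter (fun w => G.Adj v w ∧ H.Adj v w)).card
      = (univ.filter (fun w => H.Adj v w ∧ G.Adj v w)).card := by
    congr 1
    apply Finset.filter_congr
    intro w _
    exact and_comm
  have h4 : red H G v = blu G H v := rfl
  rw [h4] at h2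
  omega

end KunduProof

namespace KunduProof
open scoped Classical

variable {V : Type*} [Fintype V] [DecidableEq V]

lemma move (k : ℕ) (d : V → ℕ) (hk : ∀ i, k ≤ d i) (G H : SimpleGraph V)
    (hG : ∀ i, deg' G i = d i) (hH : ∀ i, deg' H i = d i - k)
    (hpos : 0 < meas G H) :
    (∃ G', (∀ i, deg' G' i = d i) ∧ meas G' H < meas G H) ∨
    (∃ H', (∀ i, deg' H' i = d i - k) ∧ meas G H' < meas G H) := by
  have hBR : ∀ v, (blu G H v).card = (red G H v).card + k := by
    intro v
    have h := blu_red G H v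
    have h1 := hG v
    have h2 := hH v
    have h3 := hk v
    omega
  have hex : ∃ x, 0 < (red G H x).card := by
    by_contra hcon
    push_neg at hcon
    have : meas G H = 0 := Finset.sum_eq_zero (fun v _ => Nat.le_zero.mp (hcon v))
    omega
  obtain ⟨x₀, hx₀⟩ := hex
  obtain ⟨u, -, hu⟩ := Finset.exists_max_image univ (fun v => (red G H v).card)
    ⟨x₀, mem_univ x₀⟩
  have hu' : ∀ v, (red G H v).card ≤ (red G H u).card := fun v => hu v (mem_univ v)
  have hured : 0 < (red G H u).card := lt_of_lt_of_le hx₀ (hu' x₀)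
  obtain ⟨v, hvmem⟩ := Finset.card_pos.mp hured
  have hv := mem_red.mp hvmem
  have huv : u ≠ v := hv.1.ne
  have hvredu : u ∈ red G H v := mem_red.mpr ⟨hv.1.symm, fun h => hv.2 h.symm⟩
  have hvblu : 0 < (blu G H v).card := by
    have := hBR v
    have : 0 < (red G H v).card := card_pos.mpr ⟨u, hvredu⟩
    omega
  obtain ⟨w, hwmem⟩ := card_pos.mp hvblu
  have hw := mem_blu.mp hwmem
  have hwv : w ≠ v := hw.1.ne'
  have hwu : w ≠ u := by
    intro e
    subst e
    exact hv.2 hw.1.symm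
  have hclaim : ∃ dd ∈ blu G H u, dd ≠ w ∧ ¬(G.Adj w dd ∧ ¬H.Adj w dd) := by
    by_contra hcon
    push_neg at hcon
    have hsub : ∀ z ∈ blu G H u, z ≠ w → z ∈ blu G H w := by
      intro z hz hzw
      exact mem_blu.mpr (hcon z hz hzw)
    have hvw : v ∈ blu G H w := mem_blu.mpr ⟨hw.1.symm, fun h => hw.2 h.symm⟩
    have hvnotu : v ∉ blu G H u := fun h => hv.2 (mem_blu.mp h).1
    have key : (blu G H u).card + 1 ≤ (blu G H w).card := by
      by_cases hwbu : w ∈ blu G H u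
      · have hsub2 : insert v (insert u ((blu G H u).erase w)) ⊆ blu G H w := by
          intro z hz
          rcases mem_insert.mp hz with rfl | hz2
          · exact hvw
          rcases mem_insert.mp hz2 with rfl | hz3
          · exact mem_blu.mpr ⟨(mem_blu.mp hwbu).1.symm, fun h => (mem_blu.mp hwbu).2 h.symm⟩
          · exact hsub z (mem_of_mem_erase hz3) (ne_of_mem_erase hz3)
        have h1 : u ∉ (blu G H u).erase w :=
          fun h => G.loopless.irrefl u (mem_blu.mp (mem_of_mem_erase h)).1
        have h2 : v ∉ insert u ((blu G H u).erase w) := by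
          intro h
          rcases mem_insert.mp h with e | h2
          · exact huv e.symm
          · exact hvnotu (mem_of_mem_erase h2)
        have hcard := card_le_card hsub2
        rw [card_insert_of_notMem h2, card_insert_of_notMem h1] at hcard
        have h3 := Finset.card_erase_add_one hwbu
        omega
      · have hsub2 : insert v (blu G H u) ⊆ blu G H w := by
          intro z hz
          rcases mem_insert.mp hz with rfl | hz2
          · exact hvw
          · exact hsub z hz2 (fun e => hwbu (e ▸ hz2))
        have hcard := card_le_card hsub2
        rw [card_insert_of_notMem hvnotu] at hcard
        omega
    have hw_le := hu' w
    have h1 := hBR u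
    have h2 := hBR w
    omega
  obtain ⟨dd, hddb', hddw, hddcase⟩ := hclaim
  have hddb := mem_blu.mp hddb'
  have hddu : dd ≠ u := fun e => G.loopless.irrefl u (e ▸ hddb.1)
  have hddv : dd ≠ v := fun e => hv.2 (e ▸ hddb.1)
  by_cases hGwdd : G.Adj w dd
  · -- switch on H : remove {v,u},{w,dd}, add {v,w},{u,dd}
    have hHwdd : H.Adj w dd := by
      by_contra hcc
      exact hddcase ⟨hGwdd, hcc⟩
    refine Or.inr ⟨sw H v u w dd hwv.symm hddu.symm, ?_, ?_⟩
    · intro i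
      exact (sw_deg H v u w dd huv.symm hwv.symm hddv.symm hwu.symm hddu.symm hddw.symm
        hv.1.symm hHwdd hw.2 hddb.2 i).trans (hH i)
    · have hsubAll : ∀ x, red G (sw H v u w dd hwv.symm hddu.symm) x ⊆ red G H x := by
        intro x z hz
        rw [mem_red] at hz ⊢
        refine ⟨?_, hz.2⟩
        rcases hz.1.1 with h | h | h
        · exact h
        · exfalso
          rcases h with ⟨e1, e2⟩ | ⟨e1, e2⟩
          · subst e1; subst e2; exact hz.2 hw.1
          · subst e1; subst e2; exact hz.2 hw.1.symm
        · exfalso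
          rcases h with ⟨e1, e2⟩ | ⟨e1, e2⟩
          · subst e1; subst e2; exact hz.2 hddb.1
          · subst e1; subst e2; exact hz.2 hddb.1.symm
      apply Finset.sum_lt_sum (fun x _ => card_le_card (hsubAll x))
      refine ⟨u, mem_univ u, ?_⟩
      apply card_lt_card
      rw [Finset.ssubset_iff_of_subset (hsubAll u)]
      refine ⟨v, hvmem, ?_⟩
      intro hmem
      exact (mem_red.mp hmem).1.2 (Or.inl (Or.inr ⟨rfl, rfl⟩))
  · -- switch on G : remove {v,w},{u,dd}, add {v,u},{w,dd}
    refine Or.inl ⟨sw G v w u dd huv.symm (fun e => hddw e.symm), ?_, ?_⟩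
    · intro i
      exact (sw_deg G v w u dd hwv.symm huv.symm hddv.symm hwu (fun e => hddw e.symm)
        hddu.symm hw.1 hddb.1 (fun h => hv.2 h.symm) hGwdd i).trans (hG i)
    · have hsubAll : ∀ x, red (sw G v w u dd huv.symm (fun e => hddw e.symm)) H x
          ⊆ red G H x := by
        intro x z hz
        rw [mem_red] at hz ⊢
        refine ⟨hz.1, ?_⟩
        intro hGxz
        apply hz.2
        refine ⟨Or.inl hGxz, ?_⟩
        rintro ((⟨e1, e2⟩ | ⟨e1, e2⟩) | (⟨e1, e2⟩ | ⟨e1, e2⟩))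
        · subst e1; subst e2; exact hw.2 hz.1
        · subst e1; subst e2; exact hw.2 hz.1.symm
        · subst e1; subst e2; exact hddb.2 hz.1
        · subst e1; subst e2; exact hddb.2 hz.1.symm
      apply Finset.sum_lt_sum (fun x _ => card_le_card (hsubAll x))
      refine ⟨u, mem_univ u, ?_⟩
      apply card_lt_card
      rw [Finset.ssubset_iff_of_subset (hsubAll u)]
      refine ⟨v, hvmem, ?_⟩
      intro hmem
      apply (mem_red.mp hmem).2
      refine ⟨Or.inr (Or.inl (Or.inr ⟨rfl, rfl⟩)), ?_⟩
      rintro ((⟨e1, e2⟩ | ⟨e1, e2⟩) | (⟨e1, e2⟩ | ⟨e1, e2⟩))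
      · exact huv e1
      · exact hwu e1.symm
      · exact hddv e2.symm
      · exact hddu e1.symm
  
end KunduProof

namespace KunduProof
open scoped Classical

variable {V : Type*} [Fintype V] [DecidableEq V]

lemma descend (k : ℕ) (d : V → ℕ) (hk : ∀ i, k ≤ d i) :
    ∀ m (G H : SimpleGraph V), (∀ i, deg' G i = d i) → (∀ i, deg' H i = d i - k) →
      meas G H ≤ m →
      ∃ G' H' : SimpleGraph V,
        (∀ i, deg' G' i = d i) ∧ (∀ i, deg' H' i = d i - k) ∧ H' ≤ G' := by
  intro m
  induction m with
  | zero =>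
    intro G H hG hH hm
    refine ⟨G, H, hG, hH, ?_⟩
    intro x y hxy
    by_contra hnadj
    have hmem : y ∈ red G H x := mem_red.mpr ⟨hxy, hnadj⟩
    have h0 : meas G H = 0 := Nat.le_zero.mp hm
    have := (Finset.sum_eq_zero_iff.mp h0) x (mem_univ x)
    rw [Finset.card_eq_zero] at this
    rw [this] at hmem
    exact absurd hmem (Finset.notMem_empty y)
  | succ m ih =>
    intro G H hG hH hm
    rcases Nat.eq_zero_or_pos (meas G H) with h0 | hpos
    · exact ih G H hG hH (h0 ▸ Nat.zero_le m)
    · rcases move k d hk G H hG hH hpos with ⟨G', hG', hlt⟩ | ⟨H', hH', hlt⟩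
      · exact ih G' H hG' hH (by omega)
      · exact ih G H' hG hH' (by omega)

lemma deg'_eq_degree (G : SimpleGraph V) [DecidableRel G.Adj] (v : V) :
    deg' G v = G.degree v := by
  unfold deg' nbr
  rw [Finset.filter_congr_decidable]
  have h : univ.filter (fun w => G.Adj v w) = G.neighborFinset v := by
    ext w
    simp [SimpleGraph.mem_neighborFinset]
  rw [h]
  rfl

end KunduProof

/-- A finite integer sequence is graphic if it is realized as the degree sequence of a
simple graph. -/
def IsGraphicSeq {n : ℕ} (d : Fin n → ℕ) : Prop :=
  ∃ (G : SimpleGraph (Fin n)) (_ : DecidableRel G.Adj), ∀ i, G.degree i = d i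

/-- Kundu's k-factor theorem: if `d` and `d - k` are both graphic, then `d - k` and the
constant sequence `k` pack: there are edge-disjoint graphs `A` realizing `d - k` and a
`k`-regular `B` on the same vertex set, whose union realizes `d`. -/
theorem kundu_packing {n k : ℕ} (d : Fin n → ℕ) (hk : ∀ i, k ≤ d i)
    (hd : IsGraphicSeq d) (hdk : IsGraphicSeq (fun i => d i - k)) :
    ∃ (A B : SimpleGraph (Fin n)) (_ : DecidableRel A.Adj) (_ : DecidableRel B.Adj),
      Disjoint A B ∧ (∀ i, A.degree i = d i - k) ∧ B.IsRegularOfDegree k ∧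
      ∀ i, (A ⊔ B).degree i = d i := by
  open KunduProof in
  classical
  obtain ⟨G₀, iG, hG0⟩ := hd
  obtain ⟨H₀, iH, hH0⟩ := hdk
  have hG0' : ∀ i, deg' G₀ i = d i := by
    intro i
    letI := iG
    exact (deg'_eq_degree G₀ i).trans (hG0 i)
  have hH0' : ∀ i, deg' H₀ i = d i - k := by
    intro i
    letI := iH
    exact (deg'_eq_degree H₀ i).trans (hH0 i)
  obtain ⟨G, H, hGd, hHd, hle⟩ :=
    descend k d hk (meas G₀ H₀) G₀ H₀ hG0' hH0' le_rfl
  have hredzero : ∀ v, (red G H v).card = 0 := by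
    intro v
    rw [Finset.card_eq_zero]
    exact Finset.eq_empty_iff_forall_notMem.mpr
      (fun w hw => (mem_red.mp hw).2 (hle (mem_red.mp hw).1))
  have hblu : ∀ v, (blu G H v).card = k := by
    intro v
    have h := blu_red G H v
    have h1 := hGd v
    have h2 := hHd v
    have h3 := hk v
    have h4 := hredzero v
    omega
  refine ⟨H, G \ H, Classical.decRel _, Classical.decRel _, ?_, ?_, ?_, ?_⟩
  · exact disjoint_sdiff_self_right
  · intro i
    rw [← deg'_eq_degree]
    exact hHd i
  · intro v
    rw [← deg'_eq_degree]
    have hnb : nbr (G \ H) v = blu G H v := by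
      ext w
      rw [mem_nbr, mem_blu, SimpleGraph.sdiff_adj]
    show (nbr (G \ H) v).card = k
    rw [hnb]
    exact hblu v
  · intro i
    rw [← deg'_eq_degree]
    have hU : H ⊔ (G \ H) = G := sup_sdiff_cancel' (le_refl H) hle
    rw [hU]
    exact hGd i
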